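/- For every m ≥ 1 there exists a pushdown automaton P_m with O(log m) states and stack symbols, and configurations C, C' of P_m, such that there is exactly one run from C to C', and that run has length exactly m. Moreover, the maximum stack height along this run is O(log m). -/

import Mathlib

/-- A stack operation: push a symbol, pop a symbol, or do nothing. -/
inductive StackOp (S : Type) where
  | push : S → StackOp S
  | pop : S → StackOp S
  | nop : StackOp S

/-- A pushdown automaton: a set of edges between states labeled by stack operations. -/
structure PDA (Q S : Type) where
  edges : Set (Q × StackOp S × Q)

/-- One step of the PDA on configurations (state, stack content). -/
def PDA.Step {Q S : Type} (P : PDA Q S) (c c' : Q × List S) : Prop :=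
  ∃ op : StackOp S, (c.1, op, c'.1) ∈ P.edges ∧
    match op with
    | .push a => c'.2 = a :: c.2
    | .pop a => c.2 = a :: c'.2
    | .nop => c'.2 = c.2

/-- A run from `C` to `C'`, given as the list of visited configurations. -/
def PDA.IsRun {Q S : Type} (P : PDA Q S) (C C' : Q × List S)
    (l : List (Q × List S)) : Prop :=
  l.head? = some C ∧ l.getLast? = some C' ∧ l.Chain' P.Step

namespace PdaCounter

abbrev St (K : ℕ) := Fin (3*K+3)
abbrev Sym (K : ℕ) := Fin (2*K+2)
abbrev Cfg (K : ℕ) := St K × List (Sym K)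

def qD (K j : ℕ) : St K := ⟨3 * min j K, by omega⟩
def qU (K j : ℕ) : St K := ⟨3 * min j K + 1, by omega⟩
def qM (K j : ℕ) : St K := ⟨3 * min j K + 2, by omega⟩
def sA (K j : ℕ) : Sym K := ⟨2 * min j K, by omega⟩
def sB (K j : ℕ) : Sym K := ⟨2 * min j K + 1, by omega⟩

def pda (K : ℕ) : PDA (St K) (Sym K) where
  edges := {e | (∃ j < K, e = (qD K (j+1), .push (sA K j), qD K j))
    ∨ e = (qD K 0, .nop, qU K 0)
    ∨ (∃ j < K, e = (qU K j, .pop (sA K j), qM K j))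
    ∨ (∃ j < K, e = (qM K j, .push (sB K j), qD K j))
    ∨ (∃ j < K, e = (qU K j, .pop (sB K j), qU K (j+1)))}

def runL (K : ℕ) : ℕ → List (Sym K) → List (Cfg K)
  | 0, s => [(qD K 0, s), (qU K 0, s)]
  | j+1, s => (qD K (j+1), s) ::
      (runL K j (sA K j :: s) ++ (qM K j, s) ::
        (runL K j (sB K j :: s) ++ [(qU K (j+1), s)]))

lemma runL_ne_nil (K j : ℕ) (s : List (Sym K)) : runL K j s ≠ [] := by
  cases j <;> simp [runL]

lemma head?_runL (K j : ℕ) (s : List (Sym K)) :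
    (runL K j s).head? = some (qD K j, s) := by
  cases j <;> simp [runL]

lemma getLast?_runL (K j : ℕ) (s : List (Sym K)) :
    (runL K j s).getLast? = some (qU K j, s) := by
  cases j with
  | zero => simp [runL]
  | succ j =>
    have h : runL K (j+1) s
        = ((qD K (j+1), s) :: (runL K j (sA K j :: s) ++ (qM K j, s) ::
            runL K j (sB K j :: s))) ++ [(qU K (j+1), s)] := by
      simp [runL]
    rw [h, List.getLast?_concat]

lemma runL_length (K j : ℕ) (s : List (Sym K)) :
    (runL K j s).length = 5 * 2^j - 3 := by
  induction j generalizing s with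
  | zero => simp [runL]
  | succ j ih =>
    have h1 : 1 ≤ 2^j := Nat.one_le_two_pow
    simp [runL, ih, pow_succ]
    omega

lemma mem_runL_snd (K j : ℕ) (s : List (Sym K)) :
    ∀ x ∈ runL K j s, x.2.length ≤ s.length + j := by
  induction j generalizing s with
  | zero =>
    intro x hx
    simp only [runL, List.mem_cons, List.not_mem_nil, or_false] at hx
    rcases hx with rfl | rfl <;> simp
  | succ j ih =>
    intro x hx
    simp only [runL, List.mem_cons, List.mem_append, List.not_mem_nil, or_false] at hx
    rcases hx with rfl | h | rfl | h | rfl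
    · simp
    · have := ih _ x h; simp only [List.length_cons] at this; omega
    · simp
    · have := ih _ x h; simp only [List.length_cons] at this; omega
    · simp

lemma chain_runL (K : ℕ) : ∀ j, j ≤ K → ∀ s, List.Chain' (pda K).Step (runL K j s) := by
  intro j
  induction j with
  | zero =>
    intro _ s
    simp only [runL, List.Chain', List.isChain_cons_cons, List.isChain_singleton, and_true]
    exact ⟨.nop, Or.inr (Or.inl rfl), rfl⟩
  | succ j ih =>
    intro hj s
    have hjK : j < K := hj
    have hle : j ≤ K := le_of_lt hjK
    show List.IsChain (pda K).Step ((qD K (j+1), s) ::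
      (runL K j (sA K j :: s) ++ (qM K j, s) ::
        (runL K j (sB K j :: s) ++ [(qU K (j+1), s)])))
    rw [List.isChain_cons]
    constructor
    · intro y hy
      rw [List.head?_append_of_ne_nil _ (runL_ne_nil K j _), head?_runL] at hy
      cases hy
      exact ⟨.push (sA K j), Or.inl ⟨j, hjK, rfl⟩, rfl⟩
    rw [List.isChain_append]
    refine ⟨ih hle _, ?_, ?_⟩
    · rw [List.isChain_cons]
      constructor
      · intro y hy
        rw [List.head?_append_of_ne_nil _ (runL_ne_nil K j _), head?_runL] at hy
        cases hy
        exact ⟨.push (sB K j), Or.inr (Or.inr (Or.inr (Or.inl ⟨j, hjK, rfl⟩))), rfl⟩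
      rw [List.isChain_append]
      refine ⟨ih hle _, List.isChain_singleton _, ?_⟩
      intro x hx y hy
      rw [getLast?_runL] at hx
      cases hx
      cases hy
      exact ⟨.pop (sB K j), Or.inr (Or.inr (Or.inr (Or.inr ⟨j, hjK, rfl⟩))), rfl⟩
    · intro x hx y hy
      rw [getLast?_runL] at hx
      cases hx
      rw [List.head?_cons] at hy
      cases hy
      exact ⟨.pop (sA K j), Or.inr (Or.inr (Or.inl ⟨j, hjK, rfl⟩)), rfl⟩

lemma step_cases {K : ℕ} {c c' : Cfg K} (h : (pda K).Step c c') :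
    (∃ j < K, c.1 = qD K (j+1) ∧ c'.1 = qD K j ∧ c'.2 = sA K j :: c.2) ∨
    (c.1 = qD K 0 ∧ c'.1 = qU K 0 ∧ c'.2 = c.2) ∨
    (∃ j < K, c.1 = qU K j ∧ c'.1 = qM K j ∧ c.2 = sA K j :: c'.2) ∨
    (∃ j < K, c.1 = qM K j ∧ c'.1 = qD K j ∧ c'.2 = sB K j :: c.2) ∨
    (∃ j < K, c.1 = qU K j ∧ c'.1 = qU K (j+1) ∧ c.2 = sB K j :: c'.2) := by
  obtain ⟨op, he, hm⟩ := h
  rcases he with ⟨j, hj, he⟩ | he | ⟨j, hj, he⟩ | ⟨j, hj, he⟩ | ⟨j, hj, he⟩ <;>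
    simp only [Prod.mk.injEq] at he <;>
    obtain ⟨h1, h2, h3⟩ := he <;> subst h2
  · exact Or.inl ⟨j, hj, h1, h3, hm⟩
  · exact Or.inr (Or.inl ⟨h1, h3, hm⟩)
  · exact Or.inr (Or.inr (Or.inl ⟨j, hj, h1, h3, hm⟩))
  · exact Or.inr (Or.inr (Or.inr (Or.inl ⟨j, hj, h1, h3, hm⟩)))
  · exact Or.inr (Or.inr (Or.inr (Or.inr ⟨j, hj, h1, h3, hm⟩)))

lemma stuck {K : ℕ} {s : List (Sym K)} (c : Cfg K) : ¬ (pda K).Step (qU K K, s) c := by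
  intro h
  rcases step_cases h with ⟨j,hj,h1,_⟩ | ⟨h1,_⟩ | ⟨j,hj,h1,_⟩ | ⟨j,hj,h1,_⟩ | ⟨j,hj,h1,_⟩ <;>
    simp only [qD, qU, qM, Fin.mk.injEq] at h1 <;> omega

lemma step_det {K : ℕ} {c c₁ c₂ : Cfg K}
    (h₁ : (pda K).Step c c₁) (h₂ : (pda K).Step c c₂) : c₁ = c₂ := by
  have A := step_cases h₁
  have B := step_cases h₂
  rcases A with ⟨j,hj,e1,e2,e3⟩ | ⟨e1,e2,e3⟩ | ⟨j,hj,e1,e2,e3⟩ | ⟨j,hj,e1,e2,e3⟩ | ⟨j,hj,e1,e2,e3⟩ <;>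
  rcases B with ⟨j',hj',f1,f2,f3⟩ | ⟨f1,f2,f3⟩ | ⟨j',hj',f1,f2,f3⟩ | ⟨j',hj',f1,f2,f3⟩ | ⟨j',hj',f1,f2,f3⟩ <;>
    rw [e1] at f1 <;>
    simp only [qD, qU, qM, Fin.mk.injEq] at f1 <;>
    try omega
  all_goals (
    first
    | · have hjj : j = j' := by omega
        subst hjj
        first
          | exact Prod.ext (e2.trans f2.symm) (e3.trans f3.symm)
          | (rw [e3] at f3
             simp only [List.cons.injEq] at f3
             exact Prod.ext (e2.trans f2.symm) f3.2)
    | exact Prod.ext (e2.trans f2.symm) (e3.trans f3.symm)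
    | · exfalso
        rw [e3] at f3
        simp only [List.cons.injEq, sA, sB, Fin.mk.injEq] at f3
        omega)

lemma chain_prefix {α : Type} {R : α → α → Prop}
    (hdet : ∀ c c₁ c₂, R c c₁ → R c c₂ → c₁ = c₂) :
    ∀ l l' : List α, List.Chain' R l → List.Chain' R l' → l.head? = l'.head? →
      l <+: l' ∨ l' <+: l := by
  intro l
  induction l with
  | nil => intro l' _ _ _; exact Or.inl List.nil_prefix
  | cons a t ih =>
    intro l' hc hc' hh
    cases l' with
    | nil => exact Or.inr List.nil_prefix
    | cons a' t' =>
      simp only [List.head?_cons, Option.some.injEq] at hh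
      subst hh
      cases t with
      | nil => exact Or.inl (List.cons_prefix_cons.mpr ⟨rfl, List.nil_prefix⟩)
      | cons b u =>
        cases t' with
        | nil => exact Or.inr (List.cons_prefix_cons.mpr ⟨rfl, List.nil_prefix⟩)
        | cons b' u' =>
          have hr : R a b := (List.isChain_cons_cons.mp hc).1
          have hr' : R a b' := (List.isChain_cons_cons.mp hc').1
          have hb : b = b' := hdet a b b' hr hr'
          subst hb
          rcases ih (b :: u') (List.isChain_cons_cons.mp hc).2 (List.isChain_cons_cons.mp hc').2 rfl
            with h | h
          · exact Or.inl (List.cons_prefix_cons.mpr ⟨rfl, h⟩)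
          · exact Or.inr (List.cons_prefix_cons.mpr ⟨rfl, h⟩)

lemma run_eq_of_prefix {Q S : Type} {P : PDA Q S} {C C' : Q × List S}
    (hstuck : ∀ c, ¬ P.Step C' c) {l l' : List (Q × List S)}
    (hp : l <+: l') (h : P.IsRun C C' l) (h' : P.IsRun C C' l') : l = l' := by
  obtain ⟨h1, h2, _⟩ := h
  obtain ⟨_, _, h3'⟩ := h'
  by_cases hlen : l.length = l'.length
  · exact hp.eq_of_length hlen
  · exfalso
    have hne : l ≠ [] := by intro e; subst e; simp at h1
    have hposl : 0 < l.length := List.length_pos_iff.mpr hne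
    have hlt : l.length < l'.length := lt_of_le_of_ne hp.length_le hlen
    have hC : l[l.length - 1]'(by omega) = C' := by
      rw [List.getLast?_eq_getElem?, List.getElem?_eq_getElem (by omega)] at h2
      exact Option.some.inj h2
    have hC' : l'[l.length - 1]'(by omega) = C' := by
      rw [← hp.getElem (by omega : l.length - 1 < l.length)]; exact hC
    have hstep := List.isChain_iff_getElem.mp h3' (l.length - 1) (by omega)
    have he : l.length - 1 + 1 = l.length := by omega
    rw [hC'] at hstep
    exact hstuck _ hstep

lemma run_unique {Q S : Type} {P : PDA Q S}
    (hdet : ∀ c c₁ c₂ : Q × List S, P.Step c c₁ → P.Step c c₂ → c₁ = c₂)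
    {C C' : Q × List S} (hstuck : ∀ c, ¬ P.Step C' c)
    {l l' : List (Q × List S)} (h : P.IsRun C C' l) (h' : P.IsRun C C' l') :
    l = l' := by
  rcases chain_prefix hdet l l' h.2.2 h'.2.2 (h.1.trans h'.1.symm) with hp | hp
  · exact run_eq_of_prefix hstuck hp h h'
  · exact (run_eq_of_prefix hstuck hp h' h).symm

end PdaCounter



/-- For every `m ≥ 1` there is a PDA with `O(log m)` states and stack
symbols and configurations `C, C'` such that there is exactly one run from `C` to `C'`;
that run has length exactly `m` (i.e. visits `m+1` configurations), and its maximum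
stack height is `O(log m)`. -/
theorem pda_binary_counter :
    ∃ c : ℕ, ∀ m : ℕ, 1 ≤ m →
      ∃ (nq ns : ℕ) (P : PDA (Fin nq) (Fin ns)) (C C' : Fin nq × List (Fin ns)),
        nq ≤ c * (Nat.log 2 m + 1) ∧ ns ≤ c * (Nat.log 2 m + 1) ∧
        (∃! l : List (Fin nq × List (Fin ns)), P.IsRun C C' l) ∧
        ∀ l, P.IsRun C C' l →
          l.length = m + 1 ∧ ∀ x ∈ l, x.2.length ≤ c * (Nat.log 2 m + 1) := by
  refine ⟨6, fun m hm => ?_⟩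
  set K := Nat.log 2 m + 1 with hK
  have h2K : m + 1 ≤ 2 ^ K := Nat.lt_pow_succ_log_self (by norm_num) m
  set L := PdaCounter.runL K K [] with hL
  have hLlen : L.length = 5 * 2 ^ K - 3 := PdaCounter.runL_length K K []
  set pos := 5 * 2 ^ K - 4 - m with hpos
  have hposlen : pos + (m + 1) = L.length := by rw [hLlen]; omega
  set l₀ := L.drop pos with hl₀
  have hlen₀ : l₀.length = m + 1 := by rw [hl₀, List.length_drop]; omega
  have h₀ne : l₀ ≠ [] := by
    intro e; rw [e] at hlen₀; simp at hlen₀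
  have hrun : (PdaCounter.pda K).IsRun (l₀.head h₀ne) (PdaCounter.qU K K, []) l₀ := by
    refine ⟨List.head?_eq_head _, ?_, ?_⟩
    · rw [hl₀, List.getLast?_drop, if_neg (by omega), hL]
      exact PdaCounter.getLast?_runL K K []
    · exact (PdaCounter.chain_runL K K le_rfl []).drop pos
  have huniq : ∀ l, (PdaCounter.pda K).IsRun (l₀.head h₀ne) (PdaCounter.qU K K, []) l →
      l = l₀ := fun l hl =>
    PdaCounter.run_unique (fun _ _ _ => PdaCounter.step_det)
      (fun c => PdaCounter.stuck c) hl hrun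
  refine ⟨3 * K + 3, 2 * K + 2, PdaCounter.pda K, l₀.head h₀ne,
    (PdaCounter.qU K K, []), by omega, by omega, ⟨l₀, hrun, huniq⟩, ?_⟩
  intro l hl
  have hleq := huniq l hl
  subst hleq
  refine ⟨hlen₀, fun x hx => ?_⟩
  have hxL : x ∈ L := (List.drop_suffix pos L).subset hx
  have := PdaCounter.mem_runL_snd K K [] x hxL
  simp only [List.length_nil, Nat.zero_add] at this
  omega
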